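/- Two pinwheel triangles (right triangles with legs 1 and 2) joined along their full hypotenuses form, up to isometry, either a 'kite' quadrilateral or a 1×2 'domino' rectangle, and these are the only two possibilities up to isometry (counting the two diagonal choices of domino as one shape). -/

import Mathlib

noncomputable def pt (a b : ℝ) : EuclideanSpace ℝ (Fin 2) :=
  (WithLp.equiv 2 (Fin 2 → ℝ)).symm ![a, b]

/-- The standard pinwheel triangle: a right triangle with legs 1 and 2 and
hypotenuse from `(0.5,-0.5)` to `(-0.5,1.5)`. -/
noncomputable def stdTriangle : Set (EuclideanSpace ℝ (Fin 2)) :=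
  convexHull ℝ {pt (-0.5) (-0.5), pt 0.5 (-0.5), pt (-0.5) 1.5}

/-- The hypotenuse of the standard pinwheel triangle. -/
noncomputable def stdHyp : Set (EuclideanSpace ℝ (Fin 2)) :=
  segment ℝ (pt 0.5 (-0.5)) (pt (-0.5) 1.5)

/-- The kite: the standard triangle glued to its reflection across the
hypotenuse (the reflection of `(-0.5,-0.5)` is `(1.1,0.3)`). -/
noncomputable def kite : Set (EuclideanSpace ℝ (Fin 2)) :=
  convexHull ℝ {pt (-0.5) (-0.5), pt 0.5 (-0.5), pt 1.1 0.3, pt (-0.5) 1.5}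

/-- The domino: the 1×2 rectangle `[-0.5,0.5] × [-0.5,1.5]`. -/
noncomputable def domino : Set (EuclideanSpace ℝ (Fin 2)) :=
  convexHull ℝ {pt (-0.5) (-0.5), pt 0.5 (-0.5), pt 0.5 1.5, pt (-0.5) 1.5}

namespace KDaux

lemma pt_apply0 (a b : ℝ) : pt a b 0 = a := rfl

lemma pt_apply1 (a b : ℝ) : pt a b 1 = b := rfl

lemma pt_eta (x : EuclideanSpace ℝ (Fin 2)) : pt (x 0) (x 1) = x := by
  ext i; fin_cases i <;> rfl

lemma comb3_apply (P Q R : EuclideanSpace ℝ (Fin 2)) (a b c : ℝ) (i : Fin 2) :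
    (a • P + b • Q + c • R) i = a * P i + b * Q i + c * R i := by
  simp [PiLp.add_apply, PiLp.smul_apply]

lemma comb2_apply (P Q : EuclideanSpace ℝ (Fin 2)) (a b : ℝ) (i : Fin 2) :
    (a • P + b • Q) i = a * P i + b * Q i := by
  simp [PiLp.add_apply, PiLp.smul_apply]

lemma dist_pt (a b c d : ℝ) :
    dist (pt a b) (pt c d) = Real.sqrt ((a - c)^2 + (b - d)^2) := by
  rw [EuclideanSpace.dist_eq, Fin.sum_univ_two]
  simp [Real.dist_eq, sq_abs, pt_apply0, pt_apply1]

lemma mem_hull3 {V : Type*} [AddCommGroup V] [Module ℝ V] (P Q R : V) {a b c : ℝ}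
    (ha : 0 ≤ a) (hb : 0 ≤ b) (hc : 0 ≤ c) (habc : a + b + c = 1) :
    a • P + b • Q + c • R ∈ convexHull ℝ ({P, Q, R} : Set V) := by
  have hP : P ∈ convexHull ℝ ({P, Q, R} : Set V) := subset_convexHull _ _ (by simp)
  have hQ : Q ∈ convexHull ℝ ({P, Q, R} : Set V) := subset_convexHull _ _ (by simp)
  have hR : R ∈ convexHull ℝ ({P, Q, R} : Set V) := subset_convexHull _ _ (by simp)
  have hconv := convex_convexHull ℝ ({P, Q, R} : Set V)
  rcases eq_or_lt_of_le (by linarith : (0:ℝ) ≤ b + c) with h | h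
  · have hb0 : b = 0 := by linarith
    have hc0 : c = 0 := by linarith
    have ha1 : a = 1 := by linarith
    simpa [hb0, hc0, ha1] using hP
  · have hy : (b/(b+c)) • Q + (c/(b+c)) • R ∈ convexHull ℝ ({P, Q, R} : Set V) :=
      hconv hQ hR (by positivity) (by positivity) (by field_simp)
    have h2 := hconv hP hy ha h.le (by linarith)
    have e1 : (b + c) • ((b/(b+c)) • Q + (c/(b+c)) • R) = b • Q + c • R := by
      rw [smul_add, smul_smul, smul_smul, mul_div_cancel₀ _ h.ne', mul_div_cancel₀ _ h.ne']
    rw [e1, ← add_assoc] at h2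
    exact h2

lemma mem_hull3_pt (p0 p1 q0 q1 r0 r1 u v : ℝ) {a b c : ℝ}
    (ha : 0 ≤ a) (hb : 0 ≤ b) (hc : 0 ≤ c) (habc : a + b + c = 1)
    (h0 : a * p0 + b * q0 + c * r0 = u) (h1 : a * p1 + b * q1 + c * r1 = v) :
    pt u v ∈ convexHull ℝ ({pt p0 p1, pt q0 q1, pt r0 r1} : Set (EuclideanSpace ℝ (Fin 2))) := by
  have hx : pt u v = a • pt p0 p1 + b • pt q0 q1 + c • pt r0 r1 := by
    ext i; fin_cases i <;> simp [comb3_apply, pt] <;> linarith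
  rw [hx]; exact mem_hull3 _ _ _ ha hb hc habc

lemma mem_T {u v : ℝ} (h1 : -0.5 ≤ u) (h2 : -0.5 ≤ v) (h3 : u + v/2 ≤ 1/4) :
    pt u v ∈ convexHull ℝ
      ({pt (-0.5) (-0.5), pt 0.5 (-0.5), pt (-0.5) 1.5} : Set (EuclideanSpace ℝ (Fin 2))) :=
  mem_hull3_pt _ _ _ _ _ _ _ _ (a := 1/4 - u - v/2) (b := u + 1/2) (c := v/2 + 1/4)
    (by linarith) (by linarith) (by linarith) (by ring) (by norm_num; ring) (by norm_num; ring)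

lemma mem_M {u v : ℝ} (h1 : 1/4 ≤ u + v/2) (h2 : 3*u + 4*v ≤ 9/2) (h3 : 4*u - 3*v ≤ 7/2) :
    pt u v ∈ convexHull ℝ
      ({pt 1.1 0.3, pt 0.5 (-0.5), pt (-0.5) 1.5} : Set (EuclideanSpace ℝ (Fin 2))) :=
  mem_hull3_pt _ _ _ _ _ _ _ _ (a := u + v/2 - 1/4) (b := -(3/5)*u - (4/5)*v + 9/10)
    (c := -(2/5)*u + (3/10)*v + 7/20)
    (by linarith) (by linarith) (by linarith) (by ring) (by norm_num; ring) (by norm_num; ring)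

lemma mem_D {u v : ℝ} (h1 : 1/4 ≤ u + v/2) (h2 : u ≤ 1/2) (h3 : v ≤ 3/2) :
    pt u v ∈ convexHull ℝ
      ({pt 0.5 1.5, pt (-0.5) 1.5, pt 0.5 (-0.5)} : Set (EuclideanSpace ℝ (Fin 2))) :=
  mem_hull3_pt _ _ _ _ _ _ _ _ (a := u + v/2 - 1/4) (b := -u + 1/2) (c := -v/2 + 3/4)
    (by linarith) (by linarith) (by linarith) (by ring) (by norm_num; ring) (by norm_num; ring)

lemma mem_E {u v : ℝ} (h1 : u + v/2 ≤ 1/4) (h2 : -(1/2) ≤ 3*u + 4*v) (h3 : -(13/2) ≤ 4*u - 3*v) :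
    pt u v ∈ convexHull ℝ
      ({pt (-1.1) 0.7, pt (-0.5) 1.5, pt 0.5 (-0.5)} : Set (EuclideanSpace ℝ (Fin 2))) :=
  mem_hull3_pt _ _ _ _ _ _ _ _ (a := 1/4 - u - v/2) (b := (3/5)*u + (4/5)*v + 1/10)
    (c := (2/5)*u - (3/10)*v + 13/20)
    (by linarith) (by linarith) (by linarith) (by ring) (by norm_num; ring) (by norm_num; ring)

/-- The kite equals the union of the standard triangle and the reflected triangle. -/
lemma union_eq_kite :
    stdTriangle ∪ convexHull ℝ
      ({pt 1.1 0.3, pt 0.5 (-0.5), pt (-0.5) 1.5} : Set (EuclideanSpace ℝ (Fin 2))) = kite := by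
  apply Set.Subset.antisymm
  · apply Set.union_subset
    · exact convexHull_mono (by intro z hz; simp only [Set.mem_insert_iff,
        Set.mem_singleton_iff] at hz ⊢; tauto)
    · exact convexHull_mono (by intro z hz; simp only [Set.mem_insert_iff,
        Set.mem_singleton_iff] at hz ⊢; tauto)
  · intro x hx
    have hxQ : -0.5 ≤ x 0 ∧ -0.5 ≤ x 1 ∧ 3 * x 0 + 4 * x 1 ≤ 9/2 ∧ 4 * x 0 - 3 * x 1 ≤ 7/2 := by
      have hQconv : Convex ℝ {y : EuclideanSpace ℝ (Fin 2) |
          -0.5 ≤ y 0 ∧ -0.5 ≤ y 1 ∧ 3 * y 0 + 4 * y 1 ≤ 9/2 ∧ 4 * y 0 - 3 * y 1 ≤ 7/2} := by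
        intro p hp q hq a b ha hb hab
        simp only [Set.mem_setOf_eq] at hp hq ⊢
        rw [comb2_apply, comb2_apply]
        refine ⟨?_, ?_, ?_, ?_⟩ <;> nlinarith [hp.1, hp.2.1, hp.2.2.1, hp.2.2.2,
          hq.1, hq.2.1, hq.2.2.1, hq.2.2.2]
      refine convexHull_min ?_ hQconv hx
      intro z hz
      simp only [Set.mem_insert_iff, Set.mem_singleton_iff] at hz
      rcases hz with h | h | h | h <;> subst h <;>
        simp only [Set.mem_setOf_eq, pt_apply0, pt_apply1] <;> norm_num
    obtain ⟨hb0, hb1, hb2, hb3⟩ := hxQ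
    rcases le_or_gt (x 0 + x 1 / 2) (1/4) with h | h
    · left
      have := mem_T hb0 hb1 h
      rwa [pt_eta] at this
    · right
      have := mem_M h.le hb2 hb3
      rwa [pt_eta] at this

/-- The domino equals the union of the standard triangle and the rotated triangle. -/
lemma union_eq_domino :
    stdTriangle ∪ convexHull ℝ
      ({pt 0.5 1.5, pt (-0.5) 1.5, pt 0.5 (-0.5)} : Set (EuclideanSpace ℝ (Fin 2))) = domino := by
  apply Set.Subset.antisymm
  · apply Set.union_subset
    · exact convexHull_mono (by intro z hz; simp only [Set.mem_insert_iff,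
        Set.mem_singleton_iff] at hz ⊢; tauto)
    · exact convexHull_mono (by intro z hz; simp only [Set.mem_insert_iff,
        Set.mem_singleton_iff] at hz ⊢; tauto)
  · intro x hx
    have hxQ : -0.5 ≤ x 0 ∧ -0.5 ≤ x 1 ∧ x 0 ≤ 1/2 ∧ x 1 ≤ 3/2 := by
      have hQconv : Convex ℝ {y : EuclideanSpace ℝ (Fin 2) |
          -0.5 ≤ y 0 ∧ -0.5 ≤ y 1 ∧ y 0 ≤ 1/2 ∧ y 1 ≤ 3/2} := by
        intro p hp q hq a b ha hb hab
        simp only [Set.mem_setOf_eq] at hp hq ⊢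
        rw [comb2_apply, comb2_apply]
        refine ⟨?_, ?_, ?_, ?_⟩ <;> nlinarith [hp.1, hp.2.1, hp.2.2.1, hp.2.2.2,
          hq.1, hq.2.1, hq.2.2.1, hq.2.2.2]
      refine convexHull_min ?_ hQconv hx
      intro z hz
      simp only [Set.mem_insert_iff, Set.mem_singleton_iff] at hz
      rcases hz with h | h | h | h <;> subst h <;>
        simp only [Set.mem_setOf_eq, pt_apply0, pt_apply1] <;> norm_num
    obtain ⟨hb0, hb1, hb2, hb3⟩ := hxQ
    rcases le_or_gt (x 0 + x 1 / 2) (1/4) with h | h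
    · left
      have := mem_T hb0 hb1 h
      rwa [pt_eta] at this
    · right
      have := mem_D h.le hb2 hb3
      rwa [pt_eta] at this

lemma interior_T : pt (-0.1) 0.45 ∈ interior stdTriangle := by
  have hU : IsOpen {x : EuclideanSpace ℝ (Fin 2) |
      (-0.5 < x 0 ∧ -0.5 < x 1) ∧ x 0 + x 1 / 2 < 1/4} := by
    have c0 : Continuous fun x : EuclideanSpace ℝ (Fin 2) => x 0 := (continuous_apply 0).comp (PiLp.continuous_ofLp 2 _)
    have c1 : Continuous fun x : EuclideanSpace ℝ (Fin 2) => x 1 := (continuous_apply 1).comp (PiLp.continuous_ofLp 2 _)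
    exact ((isOpen_lt continuous_const c0).and (isOpen_lt continuous_const c1)).and
      (isOpen_lt (c0.add (c1.div_const 2)) continuous_const)
  have hsub : {x : EuclideanSpace ℝ (Fin 2) |
      (-0.5 < x 0 ∧ -0.5 < x 1) ∧ x 0 + x 1 / 2 < 1/4} ⊆ stdTriangle := by
    intro x hx
    have := mem_T hx.1.1.le hx.1.2.le hx.2.le
    rwa [pt_eta] at this
  refine interior_maximal hsub hU ?_
  simp only [Set.mem_setOf_eq, pt_apply0, pt_apply1]
  norm_num

lemma interior_E : pt (-0.1) 0.45 ∈ interior (convexHull ℝ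
    ({pt (-1.1) 0.7, pt (-0.5) 1.5, pt 0.5 (-0.5)} : Set (EuclideanSpace ℝ (Fin 2)))) := by
  have hU : IsOpen {x : EuclideanSpace ℝ (Fin 2) |
      (x 0 + x 1 / 2 < 1/4 ∧ -(1/2) < 3 * x 0 + 4 * x 1) ∧ -(13/2) < 4 * x 0 - 3 * x 1} := by
    have c0 : Continuous fun x : EuclideanSpace ℝ (Fin 2) => x 0 := (continuous_apply 0).comp (PiLp.continuous_ofLp 2 _)
    have c1 : Continuous fun x : EuclideanSpace ℝ (Fin 2) => x 1 := (continuous_apply 1).comp (PiLp.continuous_ofLp 2 _)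
    exact ((isOpen_lt (c0.add (c1.div_const 2)) continuous_const).and
      (isOpen_lt continuous_const ((c0.const_smul (3:ℝ)).add (c1.const_smul (4:ℝ))))).and
      (isOpen_lt continuous_const ((c0.const_smul (4:ℝ)).sub (c1.const_smul (3:ℝ))))
  have hsub : {x : EuclideanSpace ℝ (Fin 2) |
      (x 0 + x 1 / 2 < 1/4 ∧ -(1/2) < 3 * x 0 + 4 * x 1) ∧ -(13/2) < 4 * x 0 - 3 * x 1} ⊆
      convexHull ℝ ({pt (-1.1) 0.7, pt (-0.5) 1.5, pt 0.5 (-0.5)} :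
        Set (EuclideanSpace ℝ (Fin 2))) := by
    intro x hx
    have := mem_E hx.1.1.le hx.1.2.le hx.2.le
    rwa [pt_eta] at this
  refine interior_maximal hsub hU ?_
  simp only [Set.mem_setOf_eq, pt_apply0, pt_apply1]
  norm_num

end KDaux

set_option maxHeartbeats 2000000 in
/-- Two pinwheel triangles glued along their full hypotenuses, with disjoint
interiors, form up to isometry either a kite or a domino, and these are the
only two possibilities. -/
theorem kite_or_domino
    (e₁ e₂ : EuclideanSpace ℝ (Fin 2) ≃ᵢ EuclideanSpace ℝ (Fin 2))
    (hhyp : e₁ '' stdHyp = e₂ '' stdHyp)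
    (hdisj : Disjoint (interior (e₁ '' stdTriangle)) (interior (e₂ '' stdTriangle))) :
    ∃ g : EuclideanSpace ℝ (Fin 2) ≃ᵢ EuclideanSpace ℝ (Fin 2),
      g '' (e₁ '' stdTriangle ∪ e₂ '' stdTriangle) = kite ∨
      g '' (e₁ '' stdTriangle ∪ e₂ '' stdTriangle) = domino := by
  classical
  open KDaux in
  set f : EuclideanSpace ℝ (Fin 2) ≃ᵢ EuclideanSpace ℝ (Fin 2) := e₂.trans e₁.symm with hfdef
  have himg : ∀ s : Set (EuclideanSpace ℝ (Fin 2)), e₁.symm '' (e₂ '' s) = f '' s := by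
    intro s; rw [← Set.image_comp]; rfl
  have hsymm_img : ∀ s : Set (EuclideanSpace ℝ (Fin 2)), e₁.symm '' (e₁ '' s) = s := by
    intro s
    rw [← Set.image_comp, IsometryEquiv.symm_comp_self, Set.image_id]
  have himgint : ∀ s : Set (EuclideanSpace ℝ (Fin 2)),
      e₁.symm '' interior s = interior (e₁.symm '' s) := by
    intro s
    simpa [IsometryEquiv.coe_toHomeomorph] using e₁.symm.toHomeomorph.image_interior s
  -- `f` as an affine map
  set φ : EuclideanSpace ℝ (Fin 2) →ᵃ[ℝ] EuclideanSpace ℝ (Fin 2) :=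
    f.toRealAffineIsometryEquiv.toAffineEquiv.toAffineMap with hφdef
  have hφ : ⇑φ = ⇑f := by
    have h1 : ⇑f.toRealAffineIsometryEquiv = ⇑f := IsometryEquiv.coeFn_toRealAffineIsometryEquiv f
    funext x
    calc φ x = f.toRealAffineIsometryEquiv x := rfl
    _ = f x := by rw [h1]
  -- image of standard triangle
  have himgT : f '' stdTriangle = convexHull ℝ
      {f (pt (-0.5) (-0.5)), f (pt 0.5 (-0.5)), f (pt (-0.5) 1.5)} := by
    rw [← hφ, stdTriangle, AffineMap.image_convexHull]
    rw [Set.image_insert_eq, Set.image_insert_eq, Set.image_singleton, hφ]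
  -- f preserves the hypotenuse
  have hfhyp : f '' stdHyp = stdHyp := by
    rw [← himg, ← hhyp, hsymm_img]
  have hseg : segment ℝ (f (pt 0.5 (-0.5))) (f (pt (-0.5) 1.5)) =
      segment ℝ (pt 0.5 (-0.5)) (pt (-0.5) 1.5) := by
    have := hfhyp
    rw [stdHyp, ← hφ, image_segment, hφ] at this
    exact this
  -- disjointness in normalized position
  have hdisj2 : Disjoint (interior stdTriangle) (interior (f '' stdTriangle)) := by
    have h1 : interior stdTriangle = e₁.symm '' interior (e₁ '' stdTriangle) := by
      rw [himgint, hsymm_img]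
    have h2 : interior (f '' stdTriangle) = e₁.symm '' interior (e₂ '' stdTriangle) := by
      rw [himgint, himg]
    rw [h1, h2]
    exact (Set.disjoint_image_iff e₁.symm.injective).mpr hdisj
  -- endpoints are permuted
  have hAB : (pt 0.5 (-0.5) : EuclideanSpace ℝ (Fin 2)) ≠ pt (-0.5) 1.5 := by
    intro h
    have h0 := congrArg (fun z : EuclideanSpace ℝ (Fin 2) => z 0) h
    simp only [pt_apply0] at h0
    norm_num at h0
  have hfa : f (pt 0.5 (-0.5)) ∈ segment ℝ (pt 0.5 (-0.5)) (pt (-0.5) 1.5) := by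
    have := left_mem_segment ℝ (f (pt 0.5 (-0.5))) (f (pt (-0.5) 1.5)); rwa [hseg] at this
  have hfb : f (pt (-0.5) 1.5) ∈ segment ℝ (pt 0.5 (-0.5)) (pt (-0.5) 1.5) := by
    have := right_mem_segment ℝ (f (pt 0.5 (-0.5))) (f (pt (-0.5) 1.5)); rwa [hseg] at this
  obtain ⟨s, s', hs, hs', hss, hfa'⟩ := hfa
  obtain ⟨t, t', ht, ht', htt, hfb'⟩ := hfb
  have hdAB : dist (f (pt 0.5 (-0.5))) (f (pt (-0.5) 1.5)) =
      dist (pt 0.5 (-0.5) : EuclideanSpace ℝ (Fin 2)) (pt (-0.5) 1.5) :=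
    f.dist_eq _ _
  have hdiff : f (pt 0.5 (-0.5)) - f (pt (-0.5) 1.5) =
      (s - t) • ((pt 0.5 (-0.5) : EuclideanSpace ℝ (Fin 2)) - pt (-0.5) 1.5) := by
    rw [← hfa', ← hfb']
    have h1 : s' = 1 - s := by linarith
    have h2 : t' = 1 - t := by linarith
    rw [h1, h2]
    ext i
    simp only [PiLp.sub_apply, PiLp.add_apply, PiLp.smul_apply, smul_eq_mul]
    ring
  have habs : |s - t| = 1 := by
    have hd0 : dist (pt 0.5 (-0.5) : EuclideanSpace ℝ (Fin 2)) (pt (-0.5) 1.5) ≠ 0 :=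
      dist_ne_zero.mpr hAB
    have hc : dist (f (pt 0.5 (-0.5))) (f (pt (-0.5) 1.5)) =
        |s - t| * dist (pt 0.5 (-0.5) : EuclideanSpace ℝ (Fin 2)) (pt (-0.5) 1.5) := by
      rw [dist_eq_norm, hdiff, norm_smul, Real.norm_eq_abs, ← dist_eq_norm]
    have : |s - t| * dist (pt 0.5 (-0.5) : EuclideanSpace ℝ (Fin 2)) (pt (-0.5) 1.5) =
        1 * dist (pt 0.5 (-0.5) : EuclideanSpace ℝ (Fin 2)) (pt (-0.5) 1.5) := by
      rw [one_mul, ← hc, hdAB]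
    exact mul_right_cancel₀ hd0 this
  have hcases : (f (pt 0.5 (-0.5)) = pt 0.5 (-0.5) ∧ f (pt (-0.5) 1.5) = pt (-0.5) 1.5) ∨
      (f (pt 0.5 (-0.5)) = pt (-0.5) 1.5 ∧ f (pt (-0.5) 1.5) = pt 0.5 (-0.5)) := by
    rcases (abs_eq (by norm_num : (0:ℝ) ≤ 1)).mp habs with h | h
    · left
      have hs1 : s = 1 := by linarith
      have ht0 : t = 0 := by linarith
      have hs'0 : s' = 0 := by linarith
      have ht'1 : t' = 1 := by linarith
      constructor
      · rw [← hfa', hs1, hs'0, one_smul, zero_smul, add_zero]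
      · rw [← hfb', ht0, ht'1, one_smul, zero_smul, zero_add]
    · right
      have hs0 : s = 0 := by linarith
      have ht1 : t = 1 := by linarith
      have hs'1 : s' = 1 := by linarith
      have ht'0 : t' = 0 := by linarith
      constructor
      · rw [← hfa', hs0, hs'1, one_smul, zero_smul, zero_add]
      · rw [← hfb', ht1, ht'0, one_smul, zero_smul, add_zero]
  -- coordinates of the image of the right-angle vertex
  obtain ⟨u, v, hfC⟩ : ∃ u v, f (pt (-0.5) (-0.5)) = pt u v :=
    ⟨f (pt (-0.5) (-0.5)) 0, f (pt (-0.5) (-0.5)) 1, (pt_eta _).symm⟩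
  have hdCA : dist (f (pt (-0.5) (-0.5))) (f (pt 0.5 (-0.5))) =
      dist (pt (-0.5) (-0.5) : EuclideanSpace ℝ (Fin 2)) (pt 0.5 (-0.5)) := f.dist_eq _ _
  have hdCB : dist (f (pt (-0.5) (-0.5))) (f (pt (-0.5) 1.5)) =
      dist (pt (-0.5) (-0.5) : EuclideanSpace ℝ (Fin 2)) (pt (-0.5) 1.5) := f.dist_eq _ _
  have sqeq : ∀ a b c d a' b' c' d' : ℝ,
      dist (pt a b) (pt c d) = dist (pt a' b') (pt c' d') →
      (a - c)^2 + (b - d)^2 = (a' - c')^2 + (b' - d')^2 := by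
    intro a b c d a' b' c' d' h
    rw [dist_pt, dist_pt] at h
    have h2 := congrArg (fun z : ℝ => z^2) h
    simp only [Real.sq_sqrt (by positivity : (0:ℝ) ≤ (a-c)^2+(b-d)^2),
      Real.sq_sqrt (by positivity : (0:ℝ) ≤ (a'-c')^2+(b'-d')^2)] at h2
    exact h2
  rcases hcases with ⟨hA1, hB1⟩ | ⟨hA1, hB1⟩
  · -- f fixes both endpoints of the hypotenuse
    have e1 : (u - 0.5)^2 + (v - (-0.5))^2 = 1 := by
      have h := hdCA
      rw [hfC, hA1] at h
      have h2 := sqeq _ _ _ _ _ _ _ _ h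
      nlinarith [h2]
    have e2 : (u - (-0.5))^2 + (v - 1.5)^2 = 4 := by
      have h := hdCB
      rw [hfC, hB1] at h
      have h2 := sqeq _ _ _ _ _ _ _ _ h
      nlinarith [h2]
    have hlin : u = 2*v + 0.5 := by
      have a1 := e1; have a2 := e2
      ring_nf at a1 a2
      linarith [a1, a2]
    have hquad : (v - 0.3) * (v + 0.5) = 0 := by
      have a1 := e1
      rw [hlin] at a1
      ring_nf at a1
      nlinarith [a1]
    rcases mul_eq_zero.mp hquad with hv | hv
    · -- reflection across the hypotenuse: kite
      have hv3 : v = 0.3 := by linarith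
      have hu : u = 1.1 := by rw [hlin, hv3]; norm_num
      refine ⟨e₁.symm, Or.inl ?_⟩
      rw [Set.image_union, hsymm_img, himg, himgT, hA1, hB1, hfC, hu, hv3]
      exact union_eq_kite
    · -- identity: contradiction with disjoint interiors
      have hv3 : v = -0.5 := by linarith
      have hu : u = -0.5 := by rw [hlin, hv3]; norm_num
      exfalso
      have hfTT : f '' stdTriangle = stdTriangle := by
        rw [himgT, hA1, hB1, hfC, hu, hv3]; rfl
      rw [hfTT] at hdisj2
      have hempty := Set.disjoint_iff_inter_eq_empty.mp hdisj2
      rw [Set.inter_self] at hempty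
      have hmem := interior_T
      rw [hempty] at hmem
      exact hmem
  · -- f swaps the endpoints of the hypotenuse
    have e1 : (u - (-0.5))^2 + (v - 1.5)^2 = 1 := by
      have h := hdCA
      rw [hfC, hA1] at h
      have h2 := sqeq _ _ _ _ _ _ _ _ h
      nlinarith [h2]
    have e2 : (u - 0.5)^2 + (v - (-0.5))^2 = 4 := by
      have h := hdCB
      rw [hfC, hB1] at h
      have h2 := sqeq _ _ _ _ _ _ _ _ h
      nlinarith [h2]
    have hlin : u = 2*v - 2.5 := by
      have a1 := e1; have a2 := e2
      ring_nf at a1 a2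
      linarith [a1, a2]
    have hquad : (v - 1.5) * (v - 0.7) = 0 := by
      have a1 := e1
      rw [hlin] at a1
      ring_nf at a1
      nlinarith [a1]
    rcases mul_eq_zero.mp hquad with hv | hv
    · -- rotation about the midpoint: domino
      have hv3 : v = 1.5 := by linarith
      have hu : u = 0.5 := by rw [hlin, hv3]; norm_num
      refine ⟨e₁.symm, Or.inr ?_⟩
      rw [Set.image_union, hsymm_img, himg, himgT, hA1, hB1, hfC, hu, hv3]
      exact union_eq_domino
    · -- reflection across the perpendicular bisector: interiors overlap
      have hv3 : v = 0.7 := by linarith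
      have hu : u = -1.1 := by rw [hlin, hv3]; norm_num
      exfalso
      have hfTT : f '' stdTriangle = convexHull ℝ
          ({pt (-1.1) 0.7, pt (-0.5) 1.5, pt 0.5 (-0.5)} :
            Set (EuclideanSpace ℝ (Fin 2))) := by
        rw [himgT, hA1, hB1, hfC, hu, hv3]
      rw [hfTT] at hdisj2
      exact Set.disjoint_iff.mp hdisj2 ⟨interior_T, interior_E⟩
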